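/- Let Γ be a set and let L be a subset of [0,1]^Γ (with the product topology) that is separable and connected, and such that for every p ∈ L the set {γ ∈ Γ : p(γ) ∉ {0,1}} is countable. Then there exists a countable set Γ_L ⊆ Γ such that for every γ ∈ Γ \ Γ_L the coordinate map p ↦ p(γ) is constant on L, with constant value equal to 0 or to 1. -/

import Mathlib

universe u

open Set Topology

/-- A quasi metric: symmetric, nonnegative, vanishing exactly on the diagonal
(the triangle inequality may fail). -/
def IsQuasiMetric {K : Type u} (d : K → K → ℝ) : Prop :=
  (∀ x y, 0 ≤ d x y) ∧ (∀ x y, d x y = d y x) ∧ (∀ x y, d x y = 0 ↔ x = y)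

/-- `d` fragments `K`: every nonempty closed set has a relatively open nonempty
subset of `d`-diameter less than any prescribed `ε > 0`. -/
def Fragments {K : Type u} [TopologicalSpace K] (d : K → K → ℝ) : Prop :=
  ∀ L : Set K, L.Nonempty → IsClosed L → ∀ ε : ℝ, 0 < ε →
    ∃ U : Set K, IsOpen U ∧ (U ∩ L).Nonempty ∧
      ∀ x ∈ U ∩ L, ∀ y ∈ U ∩ L, d x y < ε

/-- `K` is almost totally disconnected: it embeds into `[0,1]^Γ` so that every
point has all but countably many coordinates in `{0,1}`. -/
def AlmostTotallyDisconnected (K : Type u) [TopologicalSpace K] : Prop :=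
  ∃ (Γ : Type u) (f : K → Γ → ℝ),
    Topology.IsEmbedding f ∧
    (∀ x γ, f x γ ∈ Set.Icc (0:ℝ) 1) ∧
    (∀ x : K, {γ : Γ | f x γ ∉ ({0, 1} : Set ℝ)}.Countable)

/-- For a separable connected subset of `[0,1]^Γ` all whose points have all but
countably many coordinates in `{0,1}`, all but countably many coordinate maps are
constant on the set, with value `0` or `1`. -/
theorem coordinates_constant_on_separable_connected
    {Γ : Type u} (L : Set (Γ → ℝ))
    (hsub : ∀ p ∈ L, ∀ γ : Γ, p γ ∈ Set.Icc (0:ℝ) 1)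
    (hsep : ∃ D : Set (Γ → ℝ), D ⊆ L ∧ D.Countable ∧ L ⊆ closure D)
    (hconn : IsConnected L)
    (hcount : ∀ p ∈ L, {γ : Γ | p γ ∉ ({0, 1} : Set ℝ)}.Countable) :
    ∃ ΓL : Set Γ, ΓL.Countable ∧
      ∀ γ ∉ ΓL, (∀ p ∈ L, p γ = 0) ∨ (∀ p ∈ L, p γ = 1) := by
  obtain ⟨D, hDL, hDc, hdense⟩ := hsep
  refine ⟨⋃ p ∈ D, {γ : Γ | p γ ∉ ({0, 1} : Set ℝ)}, ?_, ?_⟩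
  · exact hDc.biUnion fun p hp => hcount p (hDL hp)
  · intro γ hγ
    simp only [mem_iUnion, not_exists, mem_setOf_eq, not_not] at hγ
    -- the evaluation map
    set e : (Γ → ℝ) → ℝ := fun p => p γ with he
    have hec : Continuous e := continuous_apply γ
    have himD : e '' D ⊆ ({0, 1} : Set ℝ) := by
      rintro _ ⟨p, hp, rfl⟩; exact hγ p hp
    have himL : e '' L ⊆ ({0, 1} : Set ℝ) := by
      rintro _ ⟨p, hp, rfl⟩
      have hmem : e p ∈ e '' closure D := ⟨p, hdense hp, rfl⟩
      have := image_closure_subset_closure_image hec hmem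
      have hcl : IsClosed ({0, 1} : Set ℝ) :=
        (isClosed_singleton.union isClosed_singleton)
      exact (hcl.closure_subset_iff.2 himD) this
    have hpre : IsPreconnected (e '' L) := (hconn.image e hec.continuousOn).isPreconnected
    have hsplit := hpre.subset_or_subset (u := Iio (1/2 : ℝ)) (v := Ioi (1/2 : ℝ))
      isOpen_Iio isOpen_Ioi
      (Set.disjoint_left.2 fun x hx hx' => (lt_asymm (mem_Iio.1 hx) (mem_Ioi.1 hx')).elim)
      (by
        intro x hx
        rcases himL hx with h | h
        · left; rw [h, mem_Iio]; norm_num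
        · rw [mem_singleton_iff] at h
          right; rw [h, mem_Ioi]; norm_num)
    rcases hsplit with h | h
    · left
      intro p hp
      have h1 := h ⟨p, hp, rfl⟩
      rcases himL ⟨p, hp, rfl⟩ with h0 | h0
      · simpa using h0
      · rw [mem_singleton_iff] at h0
        rw [mem_Iio] at h1
        rw [h0] at h1
        norm_num at h1
    · right
      intro p hp
      have h1 := h ⟨p, hp, rfl⟩
      rcases himL ⟨p, hp, rfl⟩ with h0 | h0
      · rw [mem_Ioi] at h1
        rw [h0] at h1
        norm_num at h1
      · simpa using h0
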